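/- Let κ ≥ 4, d ≥ 2, L > 0, μ = L/κ, and let H = diag(L, μ, μ, ..., μ) be a d×d diagonal matrix. Let w_0 = c_0·(1,...,1) with c_0 ≠ 0, and define the sequence w_{t+1} = (I - η_t H) w_t with 0 ≤ η_t ≤ 2/L for all t. Then for f(w) = (1/2) wᵀ H w and any T, one has f(w_T) ≥ f(w_0)/(L/(μ(d-1)) + 1) · exp(-8T/κ). -/
import Mathlib


open Matrix

theorem sgd_lower_bound_quadratic
    (d : ℕ) (hd : 2 ≤ d) (L μ κ c0 : ℝ) (hL : 0 < L) (hκ : 4 ≤ κ)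
    (hμ : μ = L / κ) (hc0 : c0 ≠ 0)
    (H : Matrix (Fin d) (Fin d) ℝ)
    (hH : H = Matrix.diagonal (fun i => if i = ⟨0, by omega⟩ then L else μ))
    (η : ℕ → ℝ) (hη : ∀ t, 0 ≤ η t ∧ η t ≤ 2 / L)
    (w : ℕ → Fin d → ℝ)
    (hw0 : w 0 = fun _ => c0)
    (hrec : ∀ t, w (t + 1) = ((1 : Matrix (Fin d) (Fin d) ℝ) - η t • H).mulVec (w t))
    (f : (Fin d → ℝ) → ℝ) (hf : f = fun x => (1 / 2) * (x ⬝ᵥ H.mulVec x))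
    (T : ℕ) :
    f (w T) ≥ f (w 0) / (L / (μ * (d - 1)) + 1) * Real.exp (-8 * T / κ) := by
  have hκ0 : (0:ℝ) < κ := by linarith
  have hμ0 : 0 < μ := by rw [hμ]; positivity
  set z : Fin d := ⟨0, by omega⟩ with hz
  set h : Fin d → ℝ := fun i => if i = z then L else μ with hh
  -- coordinatewise recursion
  have hdiag : ∀ t i, w (t+1) i = (1 - η t * h i) * w t i := by
    intro t i
    rw [hrec t, hH]
    rw [Matrix.sub_mulVec]
    simp only [Matrix.one_mulVec, Matrix.smul_mulVec, Matrix.mulVec_diagonal,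
      Pi.sub_apply, Pi.smul_apply, smul_eq_mul]
    ring
  -- closed form
  have hclosed : ∀ t i, w t i = (∏ s ∈ Finset.range t, (1 - η s * h i)) * c0 := by
    intro t
    induction t with
    | zero => intro i; simp [hw0]
    | succ n ih =>
      intro i
      rw [hdiag n i, ih i, Finset.prod_range_succ]
      ring
  -- key scalar inequality
  have hkey : Real.exp (-4/κ) ≤ 1 - 2/κ := by
    have h1 : 1 + 4/κ ≤ Real.exp (4/κ) := by linarith [Real.add_one_le_exp (4/κ)]
    have h2 : (0:ℝ) < 1 + 4/κ := by positivity
    have h3 : Real.exp (-4/κ) ≤ 1 / (1 + 4/κ) := by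
      rw [neg_div, Real.exp_neg, inv_eq_one_div]
      exact one_div_le_one_div_of_le h2 h1
    have h4 : 1 / (1 + 4/κ) ≤ 1 - 2/κ := by
      rw [div_le_iff₀ h2]
      have he : (1 - 2/κ) * (1 + 4/κ) = 1 + 2/κ - 8/κ^2 := by field_simp; ring
      rw [he]
      have h5 : 8/κ^2 ≤ 2/κ := by
        rw [div_le_div_iff₀ (by positivity) hκ0]
        nlinarith
      linarith
    linarith
  have hfac : ∀ s : ℕ, Real.exp (-4/κ) ≤ 1 - η s * μ := by
    intro s
    have ⟨h1, h2⟩ := hη s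
    have hle : η s * μ ≤ 2/κ := by
      have : η s * μ ≤ (2/L) * μ := by nlinarith
      calc η s * μ ≤ (2/L) * μ := this
        _ = 2/κ := by rw [hμ]; field_simp
    linarith [hkey]
  -- product bound
  set P : ℝ := ∏ s ∈ Finset.range T, (1 - η s * μ) with hP
  have hPbound : Real.exp (-4*T/κ) ≤ P := by
    have hp : ∏ s ∈ Finset.range T, Real.exp (-4/κ) ≤ P :=
      Finset.prod_le_prod (fun i _ => (Real.exp_pos _).le) (fun i _ => hfac i)
    calc Real.exp (-4*T/κ) = Real.exp (-4/κ) ^ T := by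
          rw [← Real.exp_nat_mul]; congr 1; ring
      _ = ∏ s ∈ Finset.range T, Real.exp (-4/κ) := by
          rw [Finset.prod_const, Finset.card_range]
      _ ≤ P := hp
  have hE0 : (0:ℝ) < Real.exp (-4*T/κ) := Real.exp_pos _
  have hP2 : Real.exp (-8*(T:ℝ)/κ) ≤ P^2 := by
    have hmm : Real.exp (-4*T/κ) * Real.exp (-4*T/κ) ≤ P * P :=
      mul_le_mul hPbound hPbound hE0.le (le_trans hE0.le hPbound)
    calc Real.exp (-8*(T:ℝ)/κ) = Real.exp (-4*T/κ) * Real.exp (-4*T/κ) := by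
          rw [← Real.exp_add]; congr 1; ring
      _ ≤ P * P := hmm
      _ = P^2 := (sq P).symm
  -- f values
  have hfval : ∀ v : Fin d → ℝ, f v = (1/2) * ∑ i, h i * (v i)^2 := by
    intro v
    rw [hf]
    simp only [hH, dotProduct, Matrix.mulVec_diagonal]
    congr 1
    apply Finset.sum_congr rfl
    intro i _
    ring
  -- sum of h
  have hsumh : ∑ i : Fin d, h i = (L - μ) + d * μ := by
    have heach : ∀ i, h i = (if i = z then L - μ else 0) + μ := by
      intro i
      rcases eq_or_ne i z with hi | hi <;> simp [hh, hi]
    simp only [heach, Finset.sum_add_distrib, Finset.sum_ite_eq', Finset.mem_univ, if_true,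
      Finset.sum_const, Finset.card_univ, Fintype.card_fin, nsmul_eq_mul]
  have hd1 : (0:ℝ) < (d:ℝ) - 1 := by
    have : (2:ℝ) ≤ d := by exact_mod_cast hd
    linarith
  -- f(w 0)
  have hw0' : ∀ i, w 0 i = c0 := by intro i; rw [hw0]
  have hfw0 : f (w 0) = (1/2) * ((L - μ) + d * μ) * c0^2 := by
    rw [hfval]
    simp only [hw0']
    rw [← Finset.sum_mul, hsumh]
    ring
  -- RHS simplification
  have hA : (0:ℝ) < μ * ((d:ℝ) - 1) := by positivity
  have hden : L / (μ * ((d:ℝ) - 1)) + 1 ≠ 0 := by positivity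
  have hRHS : f (w 0) / (L / (μ * ((d:ℝ) - 1)) + 1) = (1/2) * μ * ((d:ℝ)-1) * c0^2 := by
    rw [hfw0, div_eq_iff hden]
    field_simp
    ring
  -- value of w T off the top coordinate
  have hwT : ∀ i : Fin d, i ≠ z → w T i = P * c0 := by
    intro i hi
    rw [hclosed T i]
    have hhi : h i = μ := by simp [hh, hi]
    rw [hhi]
  -- lower bound on f (w T)
  have hLB : (1/2) * μ * ((d:ℝ)-1) * c0^2 * P^2 ≤ f (w T) := by
    rw [hfval]
    have hsub : (Finset.univ.erase z) ⊆ Finset.univ := Finset.erase_subset _ _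
    have h1 : ∑ i ∈ Finset.univ.erase z, h i * (w T i)^2 ≤ ∑ i : Fin d, h i * (w T i)^2 := by
      apply Finset.sum_le_sum_of_subset_of_nonneg hsub
      intro i _ _
      have hpos : 0 ≤ h i := by
        rcases eq_or_ne i z with hi | hi <;> simp [hh, hi, hL.le, hμ0.le]
      exact mul_nonneg hpos (sq_nonneg _)
    have h2 : ∑ i ∈ Finset.univ.erase z, h i * (w T i)^2
        = ((d:ℝ) - 1) * (μ * (P * c0)^2) := by
      have hstep : ∑ i ∈ Finset.univ.erase z, h i * (w T i)^2
          = ∑ _i ∈ Finset.univ.erase z, μ * (P * c0)^2 := by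
        apply Finset.sum_congr rfl
        intro i hi
        have hhi : h i = μ := by simp [hh, Finset.ne_of_mem_erase hi]
        rw [hwT i (Finset.ne_of_mem_erase hi), hhi]
      rw [hstep]
      rw [Finset.sum_const, Finset.card_erase_of_mem (Finset.mem_univ z),
        Finset.card_univ, Fintype.card_fin, nsmul_eq_mul]
      have hc : ((d - 1 : ℕ) : ℝ) = (d:ℝ) - 1 := by
        have h1d : 1 ≤ d := by omega
        push_cast [h1d]
        ring
      rw [hc]
    nlinarith [h1, h2]
  -- conclude
  rw [ge_iff_le, hRHS]
  calc (1/2) * μ * ((d:ℝ)-1) * c0^2 * Real.exp (-8 * T / κ)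
      ≤ (1/2) * μ * ((d:ℝ)-1) * c0^2 * P^2 := by
        apply mul_le_mul_of_nonneg_left hP2 (by positivity)
    _ ≤ f (w T) := hLB
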